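/- Let R be a commutative ring, Λ an R-algebra, and G a finite group. Regard Hom_R(Λ, R) as a right Λ-module via (f · b)(c) = f(bc), and regard Hom_R(MonoidAlgebra Λ G, R) as a right MonoidAlgebra Λ G-module via (f · u)(v) = f(u v). If Hom_R(Λ, R) is projective as a right Λ-module, then Hom_R(MonoidAlgebra Λ G, R) is projective as a right MonoidAlgebra Λ G-module. In other words, if Λ is a quasi-Frobenius algebra relative to R, then so is the group algebra Λ[G] = MonoidAlgebra Λ G. -/

import Mathlib

section

variable (R : Type*) [CommRing R]

/-- The right `A`-module structure on `Hom_R(A, R)` given by `(f · b)(c) = f (b * c)`,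
encoded as a module structure over the opposite ring `Aᵐᵒᵖ`. -/
noncomputable instance rightDualSMul (A : Type*) [Ring A] [Algebra R A] :
    SMul Aᵐᵒᵖ (A →ₗ[R] R) :=
  ⟨fun b f => f.comp (LinearMap.mulLeft R b.unop)⟩

theorem rightDual_smul_apply {A : Type*} [Ring A] [Algebra R A]
    (b : Aᵐᵒᵖ) (f : A →ₗ[R] R) (c : A) :
    (b • f) c = f (b.unop * c) := rfl

noncomputable instance rightDualModule (A : Type*) [Ring A] [Algebra R A] :
    Module Aᵐᵒᵖ (A →ₗ[R] R) where
  one_smul f := LinearMap.ext fun c => by simp [rightDual_smul_apply]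
  mul_smul a b f := LinearMap.ext fun c => by
    simp [rightDual_smul_apply, mul_assoc]
  smul_zero a := LinearMap.ext fun c => rfl
  smul_add a f g := LinearMap.ext fun c => rfl
  add_smul a b f := LinearMap.ext fun c => by
    simp [rightDual_smul_apply, add_mul]
  zero_smul f := LinearMap.ext fun c => by
    simp [rightDual_smul_apply]

variable {R}

/-- `λ ↦ single h λ` as an `R`-linear map. -/
noncomputable def QFaux.singleLin (Λ : Type*) [Ring Λ] [Algebra R Λ] (G : Type*) (h : G) :
    Λ →ₗ[R] MonoidAlgebra Λ G where
  toFun a := MonoidAlgebra.single h a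
  map_add' a b := by simp [MonoidAlgebra.single_add]
  map_smul' r a := (MonoidAlgebra.smul_single r h a).symm

/-- evaluation at a group element, as an `R`-linear map. -/
noncomputable def QFaux.evalLin (Λ : Type*) [Ring Λ] [Algebra R Λ] (G : Type*) (g : G) :
    MonoidAlgebra Λ G →ₗ[R] Λ where
  toFun v := v.coeff g
  map_add' a b := Finsupp.add_apply a.coeff b.coeff g
  map_smul' r a := Finsupp.smul_apply r a.coeff g

variable (R)

/-- If `Λ` is a quasi-Frobenius algebra relative to `R`, i.e. the dual `Hom_R(Λ, R)`
(with right action `(f · b)(c) = f (b * c)`) is projective as a right `Λ`-module, and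
`G` is a finite group, then the group algebra `MonoidAlgebra Λ G` is again
quasi-Frobenius relative to `R`: `Hom_R(MonoidAlgebra Λ G, R)` (with right action
`(f · u)(v) = f (u * v)`) is projective as a right `MonoidAlgebra Λ G`-module. -/
theorem stmt12 (Λ : Type*) [Ring Λ] [Algebra R Λ] (G : Type*) [Group G] [Finite G]
    (h : Module.Projective Λᵐᵒᵖ (Λ →ₗ[R] R)) :
    Module.Projective (MonoidAlgebra Λ G)ᵐᵒᵖ (MonoidAlgebra Λ G →ₗ[R] R) := by
  classical
  have : Fintype G := Fintype.ofFinite G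
  obtain ⟨σ, hσ⟩ := h.out
  set D := (Λ →ₗ[R] R) with hD
  set E := (MonoidAlgebra Λ G →ₗ[R] R) with hE
  set B := (MonoidAlgebra Λ G)ᵐᵒᵖ with hB
  set rr : G → E → D := fun k F => F ∘ₗ QFaux.singleLin Λ G k with hrr
  set ee : D → E := fun d => d ∘ₗ QFaux.evalLin Λ G 1 with hee
  set τ : E → (E →₀ B) := fun F => ∑ k : G, (σ (rr k F)).sum fun d a =>
    Finsupp.single (ee d) (MulOpposite.op (MonoidAlgebra.single k⁻¹ a.unop)) with hτ
  have rr_add : ∀ k (F F' : E), rr k (F + F') = rr k F + rr k F' := fun k F F' => rfl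
  have rr_zero : ∀ k, rr k (0 : E) = 0 := fun k => rfl
  have τ_add : ∀ F F' : E, τ (F + F') = τ F + τ F' := by
    intro F F'
    rw [hτ]
    simp only [rr_add, map_add]
    rw [← Finset.sum_add_distrib]
    refine Finset.sum_congr rfl fun k _ => ?_
    refine Finsupp.sum_add_index' (fun d => by simp) (fun d a a' => ?_)
    simp [MonoidAlgebra.single_add, MulOpposite.unop_add]
  have rr_smul : ∀ (g : G) (lam : Λ) (k : G) (F : E),
      rr k ((MulOpposite.op (MonoidAlgebra.single g lam) : B) • F)
        = (MulOpposite.op lam : Λᵐᵒᵖ) • rr (g * k) F := by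
    intro g lam k F
    ext μ
    show ((MulOpposite.op (MonoidAlgebra.single g lam) : B) • F)
        (MonoidAlgebra.single k μ) = (rr (g*k) F) (lam * μ)
    rw [rightDual_smul_apply]
    show F (MonoidAlgebra.single g lam * MonoidAlgebra.single k μ)
      = F (MonoidAlgebra.single (g*k) (lam * μ))
    rw [MonoidAlgebra.single_mul_single]
  have τ_smul : ∀ (c : B) (F : E), τ (c • F) = c • τ F := by
    intro c F
    induction c using MulOpposite.rec' with
    | h u =>
    induction u using MonoidAlgebra.induction with
    | zero =>
      rw [show (MulOpposite.op (0 : MonoidAlgebra Λ G) : B) = 0 from rfl, zero_smul, zero_smul]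
      rw [hτ]
      simp only [rr_zero, map_zero, Finsupp.sum_zero_index]
      simp
    | single_add g lam u hgu hlam ih =>
      rw [MulOpposite.op_add, add_smul, add_smul, τ_add, ih]
      congr 1
      -- single generator case
      show ∑ k : G, (σ (rr k ((MulOpposite.op (MonoidAlgebra.single g lam) : B) • F))).sum
            (fun d a => Finsupp.single (ee d)
              (MulOpposite.op (MonoidAlgebra.single k⁻¹ a.unop)))
          = (MulOpposite.op (MonoidAlgebra.single g lam) : B) •
            ∑ k : G, (σ (rr k F)).sum fun d a =>
              Finsupp.single (ee d) (MulOpposite.op (MonoidAlgebra.single k⁻¹ a.unop))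
      rw [Finset.smul_sum]
      refine Fintype.sum_equiv (Equiv.mulLeft g) _ _ fun k => ?_
      rw [rr_smul, map_smul, Finsupp.sum_smul_index' (fun d => by simp),
        Finsupp.smul_sum]
      refine Finsupp.sum_congr fun d _ => ?_
      rw [Finsupp.smul_single]
      congr 1
      show MulOpposite.op (MonoidAlgebra.single k⁻¹ ((MulOpposite.op lam • σ (rr (g * k) F) d).unop))
        = MulOpposite.op (MonoidAlgebra.single g lam) *
            MulOpposite.op (MonoidAlgebra.single ((Equiv.mulLeft g) k)⁻¹ ((σ (rr (g*k) F) d).unop))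
      rw [show ((Equiv.mulLeft g) k) = g * k from rfl, ← MulOpposite.op_mul,
        MonoidAlgebra.single_mul_single, mul_inv_rev, mul_assoc, inv_mul_cancel, mul_one]
      rfl
  -- assemble the linear map and prove the left-inverse property
  refine Module.projective_def'.mpr ⟨⟨⟨τ, τ_add⟩, fun c F => τ_smul c F⟩, ?_⟩
  refine LinearMap.ext fun F => ?_
  show Finsupp.linearCombination B id (τ F) = F
  rw [hτ, map_sum]
  refine LinearMap.toAddMonoidHom_injective (MonoidAlgebra.addMonoidHom_ext fun g μ => ?_)
  simp only [LinearMap.toAddMonoidHom_coe]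
  rw [LinearMap.sum_apply]
  have key : ∀ k : G, ((Finsupp.linearCombination B id
      ((σ (rr k F)).sum fun d a => Finsupp.single (ee d)
        (MulOpposite.op (MonoidAlgebra.single k⁻¹ a.unop)))) : E)
      (MonoidAlgebra.single g μ)
      = if k = g then ((σ (rr k F)).sum fun d a => d (a.unop * μ)) else 0 := by
    intro k
    rw [map_finsuppSum, LinearMap.finsupp_sum_apply]
    have hterm : ∀ (d : D) (a : Λᵐᵒᵖ),
        ((Finsupp.linearCombination B id (Finsupp.single (ee d)
          (MulOpposite.op (MonoidAlgebra.single k⁻¹ a.unop)))) : E) (MonoidAlgebra.single g μ)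
        = if k = g then d (a.unop * μ) else 0 := by
      intro d a
      rw [Finsupp.linearCombination_single, id_eq]
      rw [show ((MulOpposite.op (MonoidAlgebra.single k⁻¹ a.unop) : B) • ee d)
            (MonoidAlgebra.single g μ)
          = (ee d) (MonoidAlgebra.single k⁻¹ a.unop * MonoidAlgebra.single g μ) from rfl]
      rw [MonoidAlgebra.single_mul_single]
      show d ((Finsupp.single (k⁻¹ * g) (a.unop * μ)) 1) = _
      rw [Finsupp.single_apply, apply_ite d, map_zero, show (k⁻¹ * g = 1) = (k = g) from by
        simp [inv_mul_eq_one, eq_comm]]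
    refine Eq.trans (Finsupp.sum_congr
      (g2 := fun d a => if k = g then d (MulOpposite.unop a * μ) else 0)
      fun d _ => hterm d _) ?_
    by_cases hk : k = g
    · simp only [hk, if_true]
    · simp only [hk, if_false, Finsupp.sum, Finset.sum_const_zero]
  refine Eq.trans (Finset.sum_congr rfl fun k _ => key k) ?_
  rw [Finset.sum_ite_eq' Finset.univ g, if_pos (Finset.mem_univ g)]
  have h2 := congrArg (fun φ : D => φ μ) (hσ (rr g F))
  simp only [Finsupp.linearCombination_apply, id_eq] at h2
  rw [LinearMap.finsupp_sum_apply] at h2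
  exact h2


end
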